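/- Let N ≥ 1 and 0 ≤ S ≤ T, 0 ≤ t ≤ T be integers, and let z₁ < z₂ < ⋯ < z_N be integers with max(0, S+t−T) ≤ z_i ≤ min(t,S)+N−1 for all i. Then det_{i,j=1,…,N}[C(t, z_i+1−j)] · det_{i,j=1,…,N}[C(T−t, S+i−1−z_j)] = det_{i,j=1,…,N}[C(T, S+i−j)] · ∏_{1≤i<j≤N}(z_i−z_j)² · ∏_{i=1}^{N} 1/( z_i!·(t−z_i+N−1)!·(S−z_i+N−1)!·(T−t−S+z_i)! ) · ∏_{i=1}^{N} ( (t+1)_{i−1}(T−t+1)_{i−1}(S−i+N)!(T−S+i−1)! )/( (T+1)_{i−1}(i−1)! ) · ( t!(T−t)!/T! )^N, where C(n,k) is the binomial coefficient (equal to 0 when k < 0 or k > n). Consequently the one-dimensional distribution of the path model at time t is a Hahn orthogonal polynomial ensemble. -/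

import Mathlib

/-- The binomial coefficient `C(n,k)` for integer arguments (as a rational number),
equal to `0` when `k < 0` or `k > n`. -/
def binomQ (n k : ℤ) : ℚ := if 0 ≤ k ∧ k ≤ n then (Nat.choose n.toNat k.toNat : ℚ) else 0

/-- The factorial of an integer (for nonnegative arguments), as a rational number. -/
def zfact (n : ℤ) : ℚ := (Nat.factorial n.toNat : ℚ)

/-- The Pochhammer symbol `(a)_i = a(a+1)⋯(a+i−1)`, with `(a)_0 = 1`. -/
def pochQ (a : ℚ) (i : ℕ) : ℚ := ∏ j ∈ Finset.range i, (a + j)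

section Aux
open Finset Polynomial

lemma zfact_ne_zero (n : ℤ) : zfact n ≠ 0 := by
  simp [zfact, Nat.factorial_ne_zero]

lemma descQ (m j : ℕ) (h : j ≤ m) :
    ∏ k ∈ range j, ((m : ℚ) - k) = (Nat.factorial m : ℚ) / (Nat.factorial (m - j) : ℚ) := by
  induction j with
  | zero => simp [Nat.factorial_ne_zero]
  | succ j ih =>
    have hj : j ≤ m := Nat.le_of_succ_le h
    rw [Finset.prod_range_succ, ih hj]
    have h1 : m - j = (m - (j+1)) + 1 := by omega
    have h2 : ((m : ℚ) - j) = ((m - j : ℕ) : ℚ) := by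
      push_cast [Nat.cast_sub hj]; ring
    rw [h1, Nat.factorial_succ, h2]
    have h4 : ((m - j : ℕ) : ℚ) ≠ 0 := by
      have : 0 < m - j := by omega
      positivity
    have h5 : ((m - (j+1) : ℕ) : ℚ) + 1 = ((m - j : ℕ) : ℚ) := by
      have : ((m - (j+1) : ℕ) : ℚ) + 1 = ((m - (j+1) + 1 : ℕ) : ℚ) := by push_cast; ring
      rw [this]; congr 1; omega
    have h6 : (Nat.factorial (m - (j+1)) : ℚ) ≠ 0 := by exact_mod_cast Nat.factorial_ne_zero _
    rw [Nat.cast_mul, Nat.cast_add, Nat.cast_one, h5]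
    rw [div_mul_eq_mul_div, div_eq_div_iff (by exact mul_ne_zero h4 h6) h6]
    ring
lemma ascQ (c r : ℕ) :
    ∏ k ∈ range r, ((c : ℚ) + 1 + k) =
      (Nat.factorial (c + r) : ℚ) / (Nat.factorial c : ℚ) := by
  induction r with
  | zero => simp [Nat.factorial_ne_zero]
  | succ r ih =>
    rw [Finset.prod_range_succ, ih]
    have : c + (r+1) = (c + r) + 1 := by ring
    rw [this, Nat.factorial_succ]
    have h4 : (Nat.factorial c : ℚ) ≠ 0 := by exact_mod_cast (Nat.factorial_ne_zero c)
    field_simp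
    push_cast
    ring

lemma binomQ_symm (n k : ℤ) (hn : 0 ≤ n) : binomQ n k = binomQ n (n - k) := by
  unfold binomQ
  by_cases h : 0 ≤ k ∧ k ≤ n
  · rw [if_pos h, if_pos ⟨by omega, by omega⟩]
    have : (n - k).toNat = n.toNat - k.toNat := by omega
    rw [this, Nat.choose_symm (by omega)]
  · rw [if_neg h, if_neg (by omega)]

noncomputable def Ppoly (u : ℤ) (N j : ℕ) : Polynomial ℚ :=
  (∏ k ∈ range j, (X - C (k:ℚ))) * (∏ k ∈ Ico (j+1) N, (C ((u:ℚ) + k) - X))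

lemma Ppoly_eval (u : ℤ) (N j : ℕ) (x : ℚ) :
    (Ppoly u N j).eval x =
      (∏ k ∈ range j, (x - k)) * (∏ k ∈ Ico (j+1) N, ((u:ℚ) + k - x)) := by
  simp [Ppoly, eval_prod]

lemma Ppoly_natDegree_lt (u : ℤ) (N j : ℕ) (hj : j < N) : (Ppoly u N j).natDegree < N := by
  have h1 : (∏ k ∈ range j, (X - C (k:ℚ))).natDegree ≤ j := by
    refine le_trans (natDegree_prod_le _ _) ?_
    refine le_trans (Finset.sum_le_card_nsmul _ _ 1 fun k _ => ?_) (by simp)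
    exact le_of_eq (natDegree_X_sub_C _)
  have h2 : (∏ k ∈ Ico (j+1) N, (C ((u:ℚ) + k) - X)).natDegree ≤ N - (j+1) := by
    refine le_trans (natDegree_prod_le _ _) ?_
    refine le_trans (Finset.sum_le_card_nsmul _ _ 1 fun k _ => ?_) (by simp [Nat.card_Ico])
    calc (C ((u:ℚ) + k) - X).natDegree ≤ max (C ((u:ℚ)+k)).natDegree X.natDegree :=
          natDegree_sub_le _ _
      _ ≤ 1 := by
          rw [natDegree_C, natDegree_X]; omega
  calc (Ppoly u N j).natDegree ≤ _ := natDegree_mul_le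
    _ < N := by omega

/-- the coefficient matrix -/
noncomputable def Cmat (u : ℤ) (N : ℕ) : Matrix (Fin N) (Fin N) ℚ :=
  Matrix.of fun k j : Fin N => (Ppoly u N (j : ℕ)).coeff (k : ℕ)

lemma det_poly_eval (N : ℕ) (u : ℤ) (w : Fin N → ℚ) :
    Matrix.det (Matrix.of fun i j : Fin N => (Ppoly u N (j:ℕ)).eval (w i)) =
      (∏ i : Fin N, ∏ j ∈ Ioi i, (w j - w i)) * (Cmat u N).det := by
  have hfac : (Matrix.of fun i j : Fin N => (Ppoly u N (j:ℕ)).eval (w i)) =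
      (Matrix.vandermonde w) * (Cmat u N) := by
    ext i j
    rw [Matrix.mul_apply, Matrix.of_apply]
    rw [eval_eq_sum_range' (Ppoly_natDegree_lt u N j j.isLt) (w i)]
    rw [← Fin.sum_univ_eq_sum_range (fun k => (Ppoly u N (j:ℕ)).coeff k * w i ^ k) N]
    simp [Matrix.vandermonde, Cmat, mul_comm]
  rw [hfac, Matrix.det_mul, Matrix.det_vandermonde]

lemma entry (N : ℕ) (u x : ℤ) (hu : 0 ≤ u) (hx0 : 0 ≤ x) (hx1 : x ≤ u + N - 1)
    (j : ℕ) (hj : j < N) :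
    binomQ u (x - j) =
      zfact u * ((∏ k ∈ range j, ((x:ℚ) - k)) * (∏ k ∈ Ico (j+1) N, ((u:ℚ) + k - x)))
        / (zfact x * zfact (u - x + N - 1)) := by
  rcases lt_or_ge x j with hA | hB
  · have h1 : binomQ u (x - j) = 0 := by unfold binomQ; rw [if_neg (by omega)]
    have h2 : (∏ k ∈ range j, ((x:ℚ) - k)) = 0 := by
      apply Finset.prod_eq_zero (i := x.toNat) (Finset.mem_range.mpr (by omega))
      have : ((x.toNat : ℚ)) = (x:ℚ) := by exact_mod_cast congrArg Int.cast (Int.toNat_of_nonneg hx0)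
      rw [this]; ring
    rw [h1, h2]; ring
  rcases lt_or_ge (u + j) x with hB2 | hC
  · have h1 : binomQ u (x - j) = 0 := by unfold binomQ; rw [if_neg (by omega)]
    have h2 : (∏ k ∈ Ico (j+1) N, ((u:ℚ) + k - x)) = 0 := by
      apply Finset.prod_eq_zero (i := (x - u).toNat)
        (Finset.mem_Ico.mpr ⟨by omega, by omega⟩)
      have : (((x - u).toNat : ℚ)) = ((x:ℚ) - u) := by
        exact_mod_cast congrArg Int.cast (Int.toNat_of_nonneg (show (0:ℤ) ≤ x - u by omega))
      rw [this]; ring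
    rw [h1, h2]; ring
  · -- main case : j ≤ x ≤ u + j
    set U := u.toNat with hU
    set m := x.toNat with hm
    set d := (x - j).toNat with hd
    set c := (u - x + j).toNat with hc
    set r := N - (j+1) with hr
    have hxm : ((m : ℚ)) = (x:ℚ) := by
      exact_mod_cast congrArg Int.cast (Int.toNat_of_nonneg hx0)
    have hcQ : ((c : ℚ)) = (u:ℚ) - x + j := by
      have : ((c:ℤ):ℚ) = ((u - x + j : ℤ):ℚ) :=
        congrArg Int.cast (Int.toNat_of_nonneg (show (0:ℤ) ≤ u - x + j by omega))
      push_cast at this ⊢; linarith [this]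
    have step1 : (∏ k ∈ range j, ((x:ℚ) - k)) =
        (Nat.factorial m : ℚ) / (Nat.factorial (m - j) : ℚ) := by
      rw [← descQ m j (by omega)]
      exact Finset.prod_congr rfl fun k _ => by rw [hxm]
    have step2 : (∏ k ∈ Ico (j+1) N, ((u:ℚ) + k - x)) =
        (Nat.factorial (c + r) : ℚ) / (Nat.factorial c : ℚ) := by
      rw [Finset.prod_Ico_eq_prod_range, ← ascQ c r]
      apply Finset.prod_congr rfl
      intro k _
      push_cast
      rw [hcQ]; ring
    have hLHS : binomQ u (x - j) = (Nat.choose U d : ℚ) := by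
      unfold binomQ; rw [if_pos ⟨by omega, by omega⟩]
    have hz1 : zfact x = (Nat.factorial m : ℚ) := rfl
    have hz2 : zfact (u - x + N - 1) = (Nat.factorial (c + r) : ℚ) := by
      unfold zfact; congr 2; omega
    have hz3 : zfact u = (Nat.factorial U : ℚ) := rfl
    have hdm : m - j = d := by omega
    have hcU : c = U - d := by omega
    have hdU : d ≤ U := by omega
    have key : (Nat.choose U d : ℚ) * (Nat.factorial d) * (Nat.factorial (U - d)) =
        (Nat.factorial U : ℚ) := by
      exact_mod_cast congrArg (Nat.cast (R := ℚ)) (Nat.choose_mul_factorial_mul_factorial hdU)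
    rw [hLHS, hz3, step1, step2, hz1, hz2, hdm, hcU]
    have n1 : (Nat.factorial d : ℚ) ≠ 0 := by exact_mod_cast Nat.factorial_ne_zero d
    have n2 : (Nat.factorial (U - d) : ℚ) ≠ 0 := by exact_mod_cast Nat.factorial_ne_zero _
    have n3 : (Nat.factorial m : ℚ) ≠ 0 := by exact_mod_cast Nat.factorial_ne_zero m
    have n4 : (Nat.factorial (U - d + r) : ℚ) ≠ 0 := by exact_mod_cast Nat.factorial_ne_zero _
    field_simp
    linear_combination key

lemma factQ (m : ℕ) : ∏ k ∈ range m, ((m : ℚ) - k) = (Nat.factorial m : ℚ) := by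
  rw [descQ m m le_rfl]; simp

lemma L0 (N : ℕ) :
    (∏ i : Fin N, ∏ j ∈ Ioi i, (((j:ℕ):ℚ) - ((i:ℕ):ℚ)))
      = ∏ i : Fin N, (Nat.factorial (i:ℕ) : ℚ) := by
  rw [Finset.prod_comm' (t' := Finset.univ) (s' := fun j => Iio j)
    (fun i j => by simp [and_comm])]
  refine Finset.prod_congr rfl fun j _ => ?_
  rw [show (∏ i ∈ Iio j, (((j:ℕ):ℚ) - ((i:ℕ):ℚ)))
      = ∏ k ∈ range (j:ℕ), (((j:ℕ):ℚ) - k) from ?_, factQ]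
  refine Finset.prod_bij' (fun i _ => (i:ℕ)) (fun k hk => ⟨k, lt_trans (Finset.mem_range.mp hk) j.isLt⟩)
    ?_ ?_ ?_ ?_ ?_
  · intro i hi; simp at hi ⊢; exact hi
  · intro k hk; simp at hk ⊢; exact hk
  · intro i _; simp
  · intro k _; simp
  · intro i _; rfl

lemma Cmat_det (u : ℤ) (N : ℕ) :
    (Cmat u N).det = ∏ i : Fin N, pochQ ((u:ℚ)+1) (i:ℕ) := by
  have h := det_poly_eval N u (fun i => ((i:ℕ):ℚ))
  have htri : Matrix.det (Matrix.of fun i j : Fin N => (Ppoly u N (j:ℕ)).eval (((i:ℕ):ℚ)))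
      = ∏ i : Fin N, ((Nat.factorial (i:ℕ) : ℚ) * pochQ ((u:ℚ)+1) (N - 1 - (i:ℕ))) := by
    rw [Matrix.det_of_lowerTriangular _ ?_]
    · refine Finset.prod_congr rfl fun i _ => ?_
      rw [Matrix.of_apply, Ppoly_eval, factQ]
      congr 1
      rw [Finset.prod_Ico_eq_prod_range]
      unfold pochQ
      refine Finset.prod_congr (by congr 1; omega) fun k _ => by push_cast; ring
    · intro i j hij
      rw [Matrix.of_apply, Ppoly_eval]
      apply mul_eq_zero_of_left
      apply Finset.prod_eq_zero (i := (i:ℕ)) (Finset.mem_range.mpr hij)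
      ring
  rw [htri] at h
  have hV : (∏ i : Fin N, ∏ j ∈ Ioi i, (((j:ℕ):ℚ) - ((i:ℕ):ℚ))) ≠ 0 := by
    rw [L0]
    exact Finset.prod_ne_zero_iff.mpr fun i _ => by exact_mod_cast Nat.factorial_ne_zero _
  rw [Finset.prod_mul_distrib, L0] at h
  have hF : (∏ i : Fin N, (Nat.factorial (i:ℕ) : ℚ)) ≠ 0 :=
    Finset.prod_ne_zero_iff.mpr fun i _ => by exact_mod_cast Nat.factorial_ne_zero _
  have h2 : (Cmat u N).det = ∏ i : Fin N, pochQ ((u:ℚ)+1) (N - 1 - (i:ℕ)) :=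
    (mul_left_cancel₀ hF h.symm)
  rw [h2, Fin.prod_univ_eq_prod_range (fun k => pochQ ((u:ℚ)+1) (N - 1 - k)) N,
    Finset.prod_range_reflect (fun k => pochQ ((u:ℚ)+1) k) N,
    ← Fin.prod_univ_eq_prod_range (fun k => pochQ ((u:ℚ)+1) k) N]

lemma key (N : ℕ) (u : ℤ) (hu : 0 ≤ u) (y : Fin N → ℤ)
    (h1 : ∀ i, 0 ≤ y i) (h2 : ∀ i, y i ≤ u + N - 1) :
    Matrix.det (Matrix.of fun i j : Fin N => binomQ u (y i - (j:ℤ))) =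
      (∏ i : Fin N, ∏ j ∈ Ioi i, ((y j : ℚ) - (y i : ℚ))) *
      (∏ i : Fin N, pochQ ((u:ℚ)+1) (i:ℕ)) *
      (∏ i : Fin N, (zfact u / (zfact (y i) * zfact (u - y i + (N:ℤ) - 1)))) := by
  have hM : (Matrix.of fun i j : Fin N => binomQ u (y i - (j:ℤ))) =
      Matrix.of (fun i j : Fin N =>
        (zfact u / (zfact (y i) * zfact (u - y i + (N:ℤ) - 1))) *
        (Ppoly u N (j:ℕ)).eval ((y i : ℚ))) := by
    ext i j
    rw [Matrix.of_apply, Matrix.of_apply, Ppoly_eval,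
      entry N u (y i) hu (h1 i) (h2 i) (j:ℕ) j.isLt]
    ring
  have hmc := Matrix.det_mul_column (fun i => zfact u / (zfact (y i) * zfact (u - y i + (N:ℤ) - 1)))
    (Matrix.of fun i j : Fin N => (Ppoly u N (j:ℕ)).eval ((y i : ℚ)))
  simp only [Matrix.of_apply] at hmc
  rw [hM, hmc]
  have hd := det_poly_eval N u (fun i => ((y i : ℚ)))
  rw [Cmat_det] at hd
  rw [hd]
  ring

end Aux

open Finset Polynomial in
set_option maxHeartbeats 2000000 in
/-- The identity expressing the one-dimensional distribution of the non-intersecting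
path model at time `t` (a ratio of three binomial determinants) in product form; it
exhibits the distribution as the Hahn orthogonal polynomial ensemble. Indices `i, j`
here are `0`-based, i.e. shifted by one with respect to the `1`-based statement. -/
theorem stmt_1 (N : ℕ) (hN : 1 ≤ N) (S T t : ℤ)
    (hS0 : 0 ≤ S) (hST : S ≤ T) (ht0 : 0 ≤ t) (htT : t ≤ T)
    (z : Fin N → ℤ) (hz : StrictMono z)
    (hlow : ∀ i, max 0 (S + t - T) ≤ z i)
    (hhigh : ∀ i, z i ≤ min t S + N - 1) :
    Matrix.det (Matrix.of fun i j : Fin N => binomQ t (z i - (j : ℤ))) *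
      Matrix.det (Matrix.of fun i j : Fin N => binomQ (T - t) (S + (i : ℤ) - z j))
    = Matrix.det (Matrix.of fun i j : Fin N => binomQ T (S + (i : ℤ) - (j : ℤ))) *
      (∏ i : Fin N, ∏ j ∈ Finset.Ioi i, ((z i - z j : ℤ) : ℚ) ^ 2) *
      (∏ i : Fin N, (1 / (zfact (z i) * zfact (t - z i + N - 1) *
        zfact (S - z i + N - 1) * zfact (T - t - S + z i)))) *
      (∏ i : Fin N, (pochQ ((t : ℚ) + 1) i * pochQ ((T : ℚ) - t + 1) i *
          zfact (S + N - 1 - (i : ℤ)) * zfact (T - S + (i : ℤ))) /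
        (pochQ ((T : ℚ) + 1) i * (Nat.factorial i : ℚ))) *
      (zfact t * zfact (T - t) / zfact T) ^ (N : ℕ) := by
  -- the three determinant evaluations
  have hd1 := key N t ht0 z
    (fun i => le_trans (le_max_left _ _) (hlow i))
    (fun i => le_trans (hhigh i) (by have := min_le_left t S; omega))
  -- second determinant: transpose and symmetry
  have htr2 : Matrix.det (Matrix.of fun i j : Fin N => binomQ (T - t) (S + (i : ℤ) - z j))
      = Matrix.det (Matrix.of fun i j : Fin N => binomQ (T - t) ((z i + (T - t) - S) - (j:ℤ))) := by
    rw [← Matrix.det_transpose]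
    congr 1
    ext i j
    rw [Matrix.transpose_apply, Matrix.of_apply, Matrix.of_apply,
      binomQ_symm (T - t) _ (by omega)]
    congr 1
    ring
  have hd2 := key N (T - t) (by omega) (fun i => z i + (T - t) - S)
    (fun i => by have := hlow i; have := le_max_right (0:ℤ) (S + t - T); omega)
    (fun i => by have := hhigh i; have := min_le_right t S; omega)
  have htr3 : Matrix.det (Matrix.of fun i j : Fin N => binomQ T (S + (i : ℤ) - (j:ℤ)))
      = Matrix.det (Matrix.of fun i j : Fin N => binomQ T ((T - S + (i:ℤ)) - (j:ℤ))) := by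
    rw [← Matrix.det_transpose]
    congr 1
    ext i j
    rw [Matrix.transpose_apply, Matrix.of_apply, Matrix.of_apply,
      binomQ_symm T _ (by omega)]
    congr 1
    ring
  have hd3 := key N T (by omega) (fun i => T - S + (i:ℤ))
    (fun i => by omega)
    (fun i => by
      have : ((i:ℕ):ℤ) < (N:ℤ) := by exact_mod_cast i.isLt
      omega)
  rw [hd1, htr2, hd2, htr3, hd3]
  -- abbreviations
  set V1 := ∏ i : Fin N, ∏ j ∈ Ioi i, ((z j : ℚ) - (z i : ℚ)) with hV1
  have hV2 : (∏ i : Fin N, ∏ j ∈ Ioi i, ((z j + (T - t) - S : ℤ) - (z i + (T - t) - S : ℤ) : ℚ))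
      = V1 := by
    rw [hV1]
    refine Finset.prod_congr rfl fun i _ => Finset.prod_congr rfl fun j _ => by push_cast; ring
  have hV3 : (∏ i : Fin N, ∏ j ∈ Ioi i, (((T - S + (j:ℤ) : ℤ) : ℚ) - ((T - S + (i:ℤ) : ℤ) : ℚ)))
      = ∏ i : Fin N, (Nat.factorial (i:ℕ) : ℚ) := by
    rw [← L0 N]
    refine Finset.prod_congr rfl fun i _ => Finset.prod_congr rfl fun j _ => by push_cast; ring
  have hVsq : (∏ i : Fin N, ∏ j ∈ Finset.Ioi i, ((z i - z j : ℤ) : ℚ) ^ 2) = V1 * V1 := by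
    rw [hV1, ← Finset.prod_mul_distrib]
    refine Finset.prod_congr rfl fun i _ => ?_
    rw [← Finset.prod_mul_distrib]
    refine Finset.prod_congr rfl fun j _ => by push_cast; ring
  have hq : (zfact t * zfact (T - t) / zfact T) ^ (N : ℕ)
      = ∏ _i : Fin N, (zfact t * zfact (T - t) / zfact T) := by
    rw [Finset.prod_const, Finset.card_univ, Fintype.card_fin]
  rw [hVsq, hq, hV2, hV3]
  suffices h : (∏ i : Fin N, pochQ ((t:ℚ) + 1) (i:ℕ)) *
      (∏ i : Fin N, zfact t / (zfact (z i) * zfact (t - z i + (N:ℤ) - 1))) *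
      ((∏ i : Fin N, pochQ (((T - t : ℤ):ℚ) + 1) (i:ℕ)) *
       (∏ i : Fin N, zfact (T - t) /
          (zfact (z i + (T - t) - S) * zfact (T - t - (z i + (T - t) - S) + (N:ℤ) - 1)))) =
      ((∏ i : Fin N, (Nat.factorial (i:ℕ) : ℚ)) * (∏ i : Fin N, pochQ ((T:ℚ) + 1) (i:ℕ))) *
      (∏ i : Fin N, zfact T / (zfact (T - S + (i:ℤ)) * zfact (T - (T - S + (i:ℤ)) + (N:ℤ) - 1))) *
      (∏ i : Fin N, (1 / (zfact (z i) * zfact (t - z i + (N:ℤ) - 1) *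
        zfact (S - z i + (N:ℤ) - 1) * zfact (T - t - S + z i)))) *
      (∏ i : Fin N, (pochQ ((t : ℚ) + 1) (i:ℕ) * pochQ ((T : ℚ) - t + 1) (i:ℕ) *
          zfact (S + (N:ℤ) - 1 - (i : ℤ)) * zfact (T - S + (i : ℤ))) /
        (pochQ ((T : ℚ) + 1) (i:ℕ) * (Nat.factorial (i:ℕ) : ℚ))) *
      (∏ _i : Fin N, zfact t * zfact (T - t) / zfact T) by
    linear_combination (V1 * V1) * h
  simp only [← Finset.prod_mul_distrib, ← Finset.prod_div_distrib]
  refine Finset.prod_congr rfl fun i _ => ?_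
  have c1 : ((T - t : ℤ) : ℚ) = (T:ℚ) - t := by push_cast; ring
  have c2 : zfact (T - t - (z i + (T - t) - S) + (N:ℤ) - 1) = zfact (S - z i + (N:ℤ) - 1) := by
    unfold zfact; congr 2; ring
  have c3 : zfact (T - (T - S + (i:ℤ)) + (N:ℤ) - 1) = zfact (S + (N:ℤ) - 1 - (i:ℤ)) := by
    unfold zfact; congr 2; ring
  have c4 : zfact (z i + (T - t) - S) = zfact (T - t - S + z i) := by
    unfold zfact; congr 2; ring
  have hP : pochQ ((T:ℚ) + 1) (i:ℕ) ≠ 0 := by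
    refine Finset.prod_ne_zero_iff.mpr fun j _ => ?_
    have : (0:ℚ) ≤ (T:ℚ) := by exact_mod_cast hST.trans' hS0
    positivity
  have hf : ((Nat.factorial (i:ℕ) : ℚ)) ≠ 0 := by exact_mod_cast Nat.factorial_ne_zero _
  rw [c1, c2, c3, c4]
  have n1 := zfact_ne_zero (z i)
  have n2 := zfact_ne_zero (t - z i + (N:ℤ) - 1)
  have n3 := zfact_ne_zero (S - z i + (N:ℤ) - 1)
  have n4 := zfact_ne_zero (T - t - S + z i)
  have n5 := zfact_ne_zero (T - S + (i:ℤ))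
  have n6 := zfact_ne_zero (S + (N:ℤ) - 1 - (i:ℤ))
  have n7 := zfact_ne_zero T
  have n8 := zfact_ne_zero t
  have n9 := zfact_ne_zero (T - t)
  field_simp
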